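/- Let p ≥ 5 be a prime and 0 ≤ k ≤ p-1 an integer. Then ((1/2)_k)^2 / (k!)^2 ≡ (-1)^k * C(⌊p/2⌋, k) * C(⌊p/2⌋+k, k) (mod p), where (a)_k is the Pochhammer symbol and the congruence is between rationals with denominators coprime to p. -/

import Mathlib

theorem pochhammer_half_cong (p : ℕ) (hp : p.Prime) (hp5 : 5 ≤ p)
    (k : ℕ) (hk : k ≤ p - 1) :
    (p : ℤ) ∣
      (((∏ i ∈ Finset.range k, ((1 : ℚ) / 2 + i)) ^ 2 / (k.factorial : ℚ) ^ 2)
        - (-1 : ℚ) ^ k * (Nat.choose (p / 2) k : ℚ) * (Nat.choose (p / 2 + k) k : ℚ)).num := by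
  have hodd : p % 2 = 1 := by
    rcases hp.eq_two_or_odd with h | h
    · omega
    · exact h
  set m := p / 2 with hm
  have h2m : 2 * m + 1 = p := by omega
  have hkp : k < p := by omega
  set Z : ℤ := ∏ i ∈ Finset.range k, (2 * (i : ℤ) + 1) with hZ
  have hprodQ : ∏ i ∈ Finset.range k, ((1 : ℚ) / 2 + i) = (Z : ℚ) / 2 ^ k := by
    rw [hZ]
    push_cast
    have hc : ((2 : ℚ)) ^ k = ∏ _i ∈ Finset.range k, (2 : ℚ) := by
      rw [Finset.prod_const, Finset.card_range]
    rw [hc, ← Finset.prod_div_distrib]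
    exact Finset.prod_congr rfl fun i _ => by ring
  set N : ℤ := Z ^ 2 - (-1) ^ k * (m.choose k) * ((m + k).choose k) *
      (2 ^ k * (k.factorial : ℤ)) ^ 2 with hN
  set d : ℤ := (2 ^ k * (k.factorial : ℤ)) ^ 2 with hd
  have hdpos : 0 < d := by positivity
  have hd0 : (d : ℚ) ≠ 0 := by exact_mod_cast hdpos.ne'
  have hfac0 : ((k.factorial : ℚ)) ≠ 0 := by positivity
  have hDeq : ((∏ i ∈ Finset.range k, ((1 : ℚ) / 2 + i)) ^ 2 / (k.factorial : ℚ) ^ 2)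
        - (-1 : ℚ) ^ k * (Nat.choose m k : ℚ) * (Nat.choose (m + k) k : ℚ)
      = (N : ℚ) / (d : ℚ) := by
    rw [hprodQ, hN, hd]
    push_cast
    field_simp
  -- p ∣ N
  have hdvdN : (p : ℤ) ∣ N := by
    haveI : Fact p.Prime := ⟨hp⟩
    rw [← ZMod.intCast_zmod_eq_zero_iff_dvd]
    have h2m0 : 2 * (m : ZMod p) + 1 = 0 := by
      have h : ((2 * m + 1 : ℕ) : ZMod p) = 0 := by rw [h2m]; exact ZMod.natCast_self p
      push_cast at h
      linear_combination h
    have hZ1 : (Z : ZMod p) = (-2) ^ k * ∏ i ∈ Finset.range k, ((m : ZMod p) - i) := by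
      rw [hZ]
      push_cast
      have hc : ((-2 : ZMod p)) ^ k = ∏ _i ∈ Finset.range k, (-2 : ZMod p) := by
        rw [Finset.prod_const, Finset.card_range]
      rw [hc, ← Finset.prod_mul_distrib]
      exact Finset.prod_congr rfl fun i _ => by linear_combination h2m0
    have hZ2 : (Z : ZMod p) = 2 ^ k * ∏ i ∈ Finset.range k, ((m : ZMod p) + 1 + i) := by
      rw [hZ]
      push_cast
      have hc : ((2 : ZMod p)) ^ k = ∏ _i ∈ Finset.range k, (2 : ZMod p) := by
        rw [Finset.prod_const, Finset.card_range]
      rw [hc, ← Finset.prod_mul_distrib]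
      exact Finset.prod_congr rfl fun i _ => by linear_combination -h2m0
    have hnat2 : (m + k).descFactorial k = ∏ i ∈ Finset.range k, (m + 1 + i) := by
      rw [Nat.descFactorial_eq_prod_range, ← Finset.prod_range_reflect]
      exact Finset.prod_congr rfl fun j hj => by
        have := Finset.mem_range.mp hj; omega
    have hdesc2 : (((m + k).descFactorial k : ℕ) : ZMod p)
        = ∏ i ∈ Finset.range k, ((m : ZMod p) + 1 + i) := by
      rw [hnat2]
      push_cast
      rfl
    have hdesc1 : ((m.descFactorial k : ℕ) : ZMod p)
        = ∏ i ∈ Finset.range k, ((m : ZMod p) - i) := by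
      rcases le_or_gt k m with h | h
      · rw [Nat.descFactorial_eq_prod_range]
        push_cast
        exact Finset.prod_congr rfl fun i hi => by
          have hi' := Finset.mem_range.mp hi
          rw [Nat.cast_sub (by omega)]
      · rw [Nat.descFactorial_eq_zero_iff_lt.mpr h]
        symm
        rw [Nat.cast_zero]
        exact Finset.prod_eq_zero (Finset.mem_range.mpr h) (by rw [sub_self])
    have hc1 : ((m.descFactorial k : ℕ) : ZMod p)
        = (k.factorial : ZMod p) * (m.choose k : ZMod p) := by
      exact_mod_cast congrArg (Nat.cast (R := ZMod p))
        (Nat.descFactorial_eq_factorial_mul_choose m k)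
    have hc2 : (((m + k).descFactorial k : ℕ) : ZMod p)
        = (k.factorial : ZMod p) * ((m + k).choose k : ZMod p) := by
      exact_mod_cast congrArg (Nat.cast (R := ZMod p))
        (Nat.descFactorial_eq_factorial_mul_choose (m + k) k)
    have key : (Z : ZMod p) ^ 2
        = (-1) ^ k * ((k.factorial : ZMod p) * (m.choose k : ZMod p))
          * ((k.factorial : ZMod p) * ((m + k).choose k : ZMod p)) * 4 ^ k := by
      have hpow : ((-2 : ZMod p)) ^ k * 2 ^ k = (-1 : ZMod p) ^ k * 4 ^ k := by
        rw [← mul_pow, ← mul_pow]; norm_num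
      rw [pow_two]
      nth_rewrite 1 [hZ1]
      rw [hZ2, ← hdesc1, ← hdesc2, hc1, hc2]
      linear_combination ((k.factorial : ZMod p) ^ 2 * (m.choose k : ZMod p)
        * (((m + k).choose k : ZMod p))) * hpow
    rw [hN, hd]
    push_cast
    have h4 : ((2 : ZMod p) ^ k) ^ 2 = 4 ^ k := by
      rw [← pow_mul, mul_comm k 2, pow_mul]; norm_num
    linear_combination key - ((-1 : ZMod p) ^ k * (m.choose k : ZMod p)
      * ((m + k).choose k : ZMod p) * (k.factorial : ZMod p) ^ 2) * h4
  -- conclude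
  rw [hDeq]
  set q : ℚ := (N : ℚ) / (d : ℚ) with hq
  have hden0 : ((q.den : ℚ)) ≠ 0 := by
    exact_mod_cast q.den_pos.ne'
  have hcross : q.num * d = N * (q.den : ℤ) := by
    have h1 : (q.num : ℚ) / (q.den : ℚ) = (N : ℚ) / (d : ℚ) := by rw [Rat.num_div_den]
    rw [div_eq_div_iff hden0 hd0] at h1
    exact_mod_cast h1
  have hpN : (p : ℤ) ∣ q.num * d := hcross ▸ hdvdN.mul_right _
  have hprime : Prime (p : ℤ) := Nat.prime_iff_prime_int.mp hp
  rcases hprime.dvd_mul.mp hpN with h | h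
  · exact h
  · exfalso
    have hnd : p ∣ (2 ^ k * k.factorial) ^ 2 := by
      have : (p : ℤ) ∣ ((2 ^ k * k.factorial : ℕ) : ℤ) ^ 2 := by
        rw [hd] at h; exact_mod_cast h
      exact_mod_cast this
    have h3 := hp.dvd_of_dvd_pow hnd
    rcases (Nat.Prime.dvd_mul hp).mp h3 with h2 | h2
    · have h4 := hp.dvd_of_dvd_pow h2
      have := Nat.le_of_dvd (by norm_num) h4
      omega
    · have := (Nat.Prime.dvd_factorial hp).mp h2
      omega
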